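/- For every q ∈ [1,2) there exists a constant C_q > 0 such that for every square-integrable v : ℝ → ℂ and all continuously differentiable f, g : ℝ → ℂ with f, f', g, g' square-integrable, ∫_ℝ |v(x)|^q |f(x)| |g(x)| dx ≤ C_q ‖v‖^q ‖f‖^{2−q} ‖f‖_{H¹}^{q−1} ‖g‖_{H¹}. -/

import Mathlib

open MeasureTheory Filter Topology Set
open scoped ENNReal NNReal

/-- The `L²(ℝ;ℂ)` norm of a function, `‖f‖ = (∫ ‖f(x)‖² dx)^{1/2}`. -/
noncomputable def L2norm (f : ℝ → ℂ) : ℝ := Real.sqrt (∫ x, ‖f x‖ ^ 2)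

/-- The `H¹(ℝ;ℂ)` norm of a function, `‖f‖_{H¹} = (‖f‖² + ‖f'‖²)^{1/2}`. -/
noncomputable def H1norm (f : ℝ → ℂ) : ℝ :=
  Real.sqrt ((∫ x, ‖f x‖ ^ 2) + ∫ x, ‖deriv f x‖ ^ 2)

lemma norm_sq_integrable {f : ℝ → ℂ} (hf : MemLp f 2 volume) :
    Integrable (fun x => ‖f x‖ ^ 2) := by
  have h := hf.integrable_norm_rpow two_ne_zero ENNReal.ofNat_ne_top
  refine h.congr (Eventually.of_forall fun x => ?_)
  norm_num [Real.rpow_natCast]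

/-- 1D Sobolev bound: `‖f x‖² ≤ ∫‖f‖² + ∫‖f'‖²`. -/
lemma norm_sq_le_H1_sq {f : ℝ → ℂ} (hf : ContDiff ℝ 1 f) (hf2 : MemLp f 2 volume)
    (hf'2 : MemLp (deriv f) 2 volume) (x : ℝ) :
    ‖f x‖ ^ 2 ≤ (∫ y, ‖f y‖ ^ 2) + ∫ y, ‖deriv f y‖ ^ 2 := by
  set D : ℝ → ℝ := fun y => 2 * (inner ℝ (f y) (deriv f y) : ℝ) with hDdef
  have hFd : ∀ y, HasDerivAt (fun z => ‖f z‖ ^ 2) (D y) y := fun y =>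
    ((hf.differentiable one_ne_zero y).hasDerivAt).norm_sq
  have hD_cont : Continuous D :=
    continuous_const.mul (hf.continuous.inner (hf.continuous_deriv le_rfl))
  have hbound : ∀ y, ‖D y‖ ≤ ‖f y‖ ^ 2 + ‖deriv f y‖ ^ 2 := fun y => by
    have h1 := abs_real_inner_le_norm (f y) (deriv f y)
    rw [Real.norm_eq_abs, hDdef, abs_mul, abs_two]
    nlinarith [norm_nonneg (f y), norm_nonneg (deriv f y),
      abs_nonneg (inner ℝ (f y) (deriv f y) : ℝ), sq_nonneg (‖f y‖ - ‖deriv f y‖)]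
  have hint_f : Integrable (fun y => ‖f y‖ ^ 2) := norm_sq_integrable hf2
  have hint_f' : Integrable (fun y => ‖deriv f y‖ ^ 2) := norm_sq_integrable hf'2
  have hsum_int : Integrable (fun y => ‖f y‖ ^ 2 + ‖deriv f y‖ ^ 2) := hint_f.add hint_f'
  have hD_int : Integrable D :=
    hsum_int.mono' hD_cont.aestronglyMeasurable (Eventually.of_forall hbound)
  have hFTC : ∀ b, (‖f b‖ ^ 2 : ℝ) = ‖f x‖ ^ 2 + ∫ y in x..b, D y := fun b => by
    have h := intervalIntegral.integral_eq_sub_of_hasDerivAt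
      (f := fun z => ‖f z‖ ^ 2) (f' := D) (fun y _ => hFd y)
      (hD_cont.intervalIntegrable x b)
    linarith [h]
  set L : ℝ := ‖f x‖ ^ 2 + ∫ y in Ioi x, D y with hLdef
  have hlim : Tendsto (fun b => ‖f b‖ ^ 2) atTop (𝓝 L) := by
    have h1 := MeasureTheory.intervalIntegral_tendsto_integral_Ioi x hD_int.integrableOn
      (tendsto_id (α := ℝ))
    have h2 := h1.const_add (‖f x‖ ^ 2)
    exact h2.congr fun b => (hFTC b).symm
  have hL_le : L ≤ 0 := by
    by_contra hL
    push_neg at hL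
    have hev : ∀ᶠ b in atTop, L / 2 < ‖f b‖ ^ 2 :=
      hlim.eventually (eventually_gt_nhds (by linarith))
    obtain ⟨R, hR⟩ := hev.exists_forall_of_atTop
    have hIoi : IntegrableOn (fun y => ‖f y‖ ^ 2) (Ioi R) volume := hint_f.integrableOn
    have hconst : Integrable (fun _ : ℝ => L / 2) (volume.restrict (Ioi R)) := by
      refine hIoi.mono' aestronglyMeasurable_const ?_
      rw [ae_restrict_iff' measurableSet_Ioi]
      exact Eventually.of_forall fun y hy => by
        rw [Real.norm_eq_abs, abs_of_pos (by linarith)]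
        exact (hR y (le_of_lt hy)).le
    rw [integrable_const_iff] at hconst
    rcases hconst with h | h
    · exact absurd h (by positivity)
    · rw [isFiniteMeasure_restrict, Real.volume_Ioi] at h
      exact absurd h (by simp)
  have habs : |∫ y in Ioi x, D y| ≤ (∫ y, ‖f y‖ ^ 2) + ∫ y, ‖deriv f y‖ ^ 2 := by
    have h1 : |∫ y in Ioi x, D y| ≤ ∫ y in Ioi x, ‖D y‖ := by
      simpa [Real.norm_eq_abs] using
        norm_integral_le_integral_norm (μ := volume.restrict (Ioi x)) D
    have h2 : ∫ y in Ioi x, ‖D y‖ ≤ ∫ y, ‖D y‖ :=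
      setIntegral_le_integral hD_int.norm (Eventually.of_forall fun y => norm_nonneg _)
    have h3 : ∫ y, ‖D y‖ ≤ ∫ y, (‖f y‖ ^ 2 + ‖deriv f y‖ ^ 2) :=
      integral_mono hD_int.norm hsum_int hbound
    have h4 : ∫ y, (‖f y‖ ^ 2 + ‖deriv f y‖ ^ 2) =
        (∫ y, ‖f y‖ ^ 2) + ∫ y, ‖deriv f y‖ ^ 2 := integral_add hint_f hint_f'
    linarith
  have := abs_le.mp habs
  have hLx : ‖f x‖ ^ 2 = L - ∫ y in Ioi x, D y := by rw [hLdef]; ring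
  linarith [this.1]

lemma norm_le_H1norm {f : ℝ → ℂ} (hf : ContDiff ℝ 1 f) (hf2 : MemLp f 2 volume)
    (hf'2 : MemLp (deriv f) 2 volume) (x : ℝ) : ‖f x‖ ≤ H1norm f := by
  have h := norm_sq_le_H1_sq hf hf2 hf'2 x
  have h0 : (0:ℝ) ≤ (∫ y, ‖f y‖ ^ 2) + ∫ y, ‖deriv f y‖ ^ 2 := le_trans (by positivity) h
  exact (Real.le_sqrt (norm_nonneg _) h0).mpr h

/-- For every `q ∈ [1,2)` there is `C_q > 0` such that for every
square-integrable `v : ℝ → ℂ` and all `C¹` functions `f, g : ℝ → ℂ` with `f, f', g, g'`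
square-integrable, `∫ |v|^q |f| |g| ≤ C_q ‖v‖^q ‖f‖^{2−q} ‖f‖_{H¹}^{q−1} ‖g‖_{H¹}`. -/
theorem trilinear_weighted_estimate (q : ℝ) (hq1 : 1 ≤ q) (hq2 : q < 2) :
    ∃ C > (0 : ℝ), ∀ v f g : ℝ → ℂ,
      MemLp v 2 volume →
      ContDiff ℝ 1 f → MemLp f 2 volume → MemLp (deriv f) 2 volume →
      ContDiff ℝ 1 g → MemLp g 2 volume → MemLp (deriv g) 2 volume →
      (∫ x, ‖v x‖ ^ q * ‖f x‖ * ‖g x‖) ≤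
        C * L2norm v ^ q * L2norm f ^ (2 - q) * H1norm f ^ (q - 1) * H1norm g := by
  have hq0 : (0:ℝ) < q := by linarith
  have h2q : (0:ℝ) < 2 - q := by linarith
  refine ⟨1, one_pos, fun v f g hv hf hf2 hf'2 hg hg2 hg'2 => ?_⟩
  set Mf := H1norm f with hMfdef
  set Mg := H1norm g with hMgdef
  have hMf : ∀ x, ‖f x‖ ≤ Mf := norm_le_H1norm hf hf2 hf'2
  have hMg : ∀ x, ‖g x‖ ≤ Mg := norm_le_H1norm hg hg2 hg'2
  have hMf0 : 0 ≤ Mf := Real.sqrt_nonneg _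
  have hMg0 : 0 ≤ Mg := Real.sqrt_nonneg _
  -- conjugate exponents
  set p : ℝ := 2 / q with hpdef
  set p' : ℝ := 2 / (2 - q) with hp'def
  have hp_pos : (0:ℝ) < p := div_pos two_pos hq0
  have hp'_pos : (0:ℝ) < p' := div_pos two_pos h2q
  have hconj : p.HolderConjugate p' := by
    refine Real.holderConjugate_iff.mpr ⟨?_, ?_⟩
    · rw [hpdef]; rw [lt_div_iff₀ hq0]; linarith
    · rw [inv_div, inv_div]; linarith
  -- MemLp facts
  have hvq : MemLp (fun x => ‖v x‖ ^ q) (ENNReal.ofReal p) volume := by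
    have h := hv.norm_rpow_div (ENNReal.ofReal q)
    rw [ENNReal.toReal_ofReal hq0.le] at h
    have he : (2 : ℝ≥0∞) / ENNReal.ofReal q = ENNReal.ofReal p := by
      rw [hpdef, ENNReal.ofReal_div_of_pos hq0]
      norm_num
    rwa [he] at h
  have hfq : MemLp (fun x => ‖f x‖ ^ (2 - q)) (ENNReal.ofReal p') volume := by
    have h := hf2.norm_rpow_div (ENNReal.ofReal (2 - q))
    rw [ENNReal.toReal_ofReal h2q.le] at h
    have he : (2 : ℝ≥0∞) / ENNReal.ofReal (2 - q) = ENNReal.ofReal p' := by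
      rw [hp'def, ENNReal.ofReal_div_of_pos h2q]
      norm_num
    rwa [he] at h
  -- integrability of the product
  have hBint : Integrable (fun x => ‖v x‖ ^ q * ‖f x‖ ^ (2 - q)) := by
    rw [← memLp_one_iff_integrable]
    have hexp : (1:ℝ≥0∞) / 1 = 1 / ENNReal.ofReal p + 1 / ENNReal.ofReal p' := by
      rw [one_div, one_div, one_div, ← ENNReal.ofReal_inv_of_pos hp_pos,
        ← ENNReal.ofReal_inv_of_pos hp'_pos,
        ← ENNReal.ofReal_add (by positivity) (by positivity), hpdef, hp'def, inv_div, inv_div,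
        show q / 2 + (2 - q) / 2 = 1 by ring]
      simp
    haveI : ENNReal.HolderTriple (ENNReal.ofReal p) (ENNReal.ofReal p') 1 :=
      ⟨by simpa only [one_div] using hexp.symm⟩
    exact hfq.smul hvq
  -- pointwise bound
  have hpoint : ∀ x, ‖v x‖ ^ q * ‖f x‖ * ‖g x‖ ≤
      Mf ^ (q - 1) * Mg * (‖v x‖ ^ q * ‖f x‖ ^ (2 - q)) := by
    intro x
    have hsplit : ‖f x‖ = ‖f x‖ ^ (2 - q) * ‖f x‖ ^ (q - 1) := by
      rw [← Real.rpow_add' (norm_nonneg _) (by norm_num)]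
      norm_num
    have h1 : ‖f x‖ ^ (q - 1) ≤ Mf ^ (q - 1) :=
      Real.rpow_le_rpow (norm_nonneg _) (hMf x) (by linarith)
    have hv0 : (0:ℝ) ≤ ‖v x‖ ^ q := Real.rpow_nonneg (norm_nonneg _) _
    have hf0 : (0:ℝ) ≤ ‖f x‖ ^ (2 - q) := Real.rpow_nonneg (norm_nonneg _) _
    have hfq0 : (0:ℝ) ≤ ‖f x‖ ^ (q - 1) := Real.rpow_nonneg (norm_nonneg _) _
    calc ‖v x‖ ^ q * ‖f x‖ * ‖g x‖
        = ‖v x‖ ^ q * ‖f x‖ ^ (2 - q) * (‖f x‖ ^ (q - 1) * ‖g x‖) := by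
          linear_combination (‖v x‖ ^ q * ‖g x‖) * hsplit
      _ ≤ ‖v x‖ ^ q * ‖f x‖ ^ (2 - q) * (Mf ^ (q - 1) * Mg) := by
          apply mul_le_mul_of_nonneg_left _ (by positivity)
          exact mul_le_mul h1 (hMg x) (norm_nonneg _) (by positivity)
      _ = Mf ^ (q - 1) * Mg * (‖v x‖ ^ q * ‖f x‖ ^ (2 - q)) := by ring
  -- LHS integrand is integrable
  have hLHSmeas : AEStronglyMeasurable (fun x => ‖v x‖ ^ q * ‖f x‖ * ‖g x‖) volume := by
    apply AEStronglyMeasurable.mul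
    apply AEStronglyMeasurable.mul
    · exact (hv.1.norm.aemeasurable.pow_const q).aestronglyMeasurable
    · exact hf.continuous.norm.aestronglyMeasurable
    · exact hg.continuous.norm.aestronglyMeasurable
  have hLHSint : Integrable (fun x => ‖v x‖ ^ q * ‖f x‖ * ‖g x‖) := by
    refine (hBint.const_mul (Mf ^ (q - 1) * Mg)).mono' hLHSmeas
      (Eventually.of_forall fun x => ?_)
    rw [Real.norm_eq_abs, abs_of_nonneg (by positivity)]
    exact hpoint x
  -- Hölder
  have hvnn : 0 ≤ᵐ[volume] fun x => ‖v x‖ ^ q :=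
    Eventually.of_forall fun x => Real.rpow_nonneg (norm_nonneg _) _
  have hfnn : 0 ≤ᵐ[volume] fun x => ‖f x‖ ^ (2 - q) :=
    Eventually.of_forall fun x => Real.rpow_nonneg (norm_nonneg _) _
  have holder := integral_mul_le_Lp_mul_Lq_of_nonneg hconj hvnn hfnn hvq hfq
  -- simplify hölder RHS
  have hIv : (0:ℝ) ≤ ∫ x, ‖v x‖ ^ 2 := integral_nonneg fun x => by positivity
  have hIf : (0:ℝ) ≤ ∫ x, ‖f x‖ ^ 2 := integral_nonneg fun x => by positivity
  have hrw1 : ∫ x, ((‖v x‖ ^ q) ^ p) = ∫ x, ‖v x‖ ^ 2 := by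
    refine integral_congr_ae (Eventually.of_forall fun x => ?_)
    show (‖v x‖ ^ q) ^ p = ‖v x‖ ^ 2
    rw [← Real.rpow_natCast ‖v x‖ 2, ← Real.rpow_mul (norm_nonneg _)]
    rw [show q * p = 2 by rw [hpdef]; field_simp]
    norm_num
  have hrw2 : ∫ x, ((‖f x‖ ^ (2 - q)) ^ p') = ∫ x, ‖f x‖ ^ 2 := by
    refine integral_congr_ae (Eventually.of_forall fun x => ?_)
    show (‖f x‖ ^ (2 - q)) ^ p' = ‖f x‖ ^ 2
    rw [← Real.rpow_natCast ‖f x‖ 2, ← Real.rpow_mul (norm_nonneg _)]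
    rw [show (2 - q) * p' = 2 by rw [hp'def]; field_simp]
    norm_num
  have hRHSv : (∫ x, ‖v x‖ ^ 2) ^ (1 / p) = L2norm v ^ q := by
    rw [L2norm, Real.sqrt_eq_rpow, ← Real.rpow_mul hIv]
    congr 1
    rw [hpdef, one_div_div]
    ring
  have hRHSf : (∫ x, ‖f x‖ ^ 2) ^ (1 / p') = L2norm f ^ (2 - q) := by
    rw [L2norm, Real.sqrt_eq_rpow, ← Real.rpow_mul hIf]
    congr 1
    rw [hp'def, one_div_div]
    ring
  rw [hrw1, hrw2, hRHSv, hRHSf] at holder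
  -- put everything together
  calc (∫ x, ‖v x‖ ^ q * ‖f x‖ * ‖g x‖)
      ≤ ∫ x, Mf ^ (q - 1) * Mg * (‖v x‖ ^ q * ‖f x‖ ^ (2 - q)) :=
        integral_mono hLHSint (hBint.const_mul _) hpoint
    _ = Mf ^ (q - 1) * Mg * ∫ x, ‖v x‖ ^ q * ‖f x‖ ^ (2 - q) :=
        integral_const_mul _ _
    _ ≤ Mf ^ (q - 1) * Mg * (L2norm v ^ q * L2norm f ^ (2 - q)) := by
        apply mul_le_mul_of_nonneg_left holder (by positivity)
    _ = 1 * L2norm v ^ q * L2norm f ^ (2 - q) * Mf ^ (q - 1) * Mg := by ring
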